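/- Let T be an 𝒜-tree and let x, y be two different nodes of T. If 𝒜_T(x) = 𝒜_T(y), then there is a directed path from x to y or from y to x such that its origin and all its intermediate nodes are unlabeled and elementary (i.e., have exactly one child). -/

import Mathlib

/-!
Common framework: rooted labeled trees ("𝒜-trees") following Llabrés–Rocha–Rosselló–Valiente.

A `PreTree α V` is the raw data of a directed graph on (a finite subset of) `V` together with
a partial labeling of its nodes by labels in `α`.  The predicate `PreTree.IsATree` asserts that
this data is a finite rooted tree (the root reaches every node by a unique directed path),
that the labeling is injective, and that every leaf is labeled.
-/

structure PreTree (α : Type) (V : Type) where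
  nodes : Set V
  arc : V → V → Prop
  label : V → Option α

namespace PreTree

variable {α V W : Type}

/-- There is a directed path from `u` to `v` (possibly trivial). -/
def path (T : PreTree α V) (u v : V) : Prop := Relation.ReflTransGen T.arc u v

/-- There is a non-trivial directed path (length ≥ 1) from `u` to `v`. -/
def pathNT (T : PreTree α V) (u v : V) : Prop := Relation.TransGen T.arc u v

/-- `𝒜(T)`: the set of labels of all nodes of `T`. -/
def labelSet (T : PreTree α V) : Set α := {a | ∃ v, T.label v = some a}

/-- `𝒜_T(v)`: the cluster of `v`, i.e. the set of labels of all descendants of `v`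
(including `v` itself). -/
def cluster (T : PreTree α V) (v : V) : Set α := {a | ∃ w, T.path v w ∧ T.label w = some a}

/-- `𝒞_𝒜(T)`: the cluster representation of `T`. -/
def clusterRep (T : PreTree α V) : Set (Set α) := {C | ∃ v ∈ T.nodes, T.cluster v = C}

/-- A leaf is a node without children. -/
def IsLeaf (T : PreTree α V) (v : V) : Prop := v ∈ T.nodes ∧ ∀ w, ¬ T.arc v w

/-- `ℒ(T)`: the set of labels of the leaves of `T`. -/
def leafLabels (T : PreTree α V) : Set α := {a | ∃ v, T.IsLeaf v ∧ T.label v = some a}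

/-- A node is elementary when it has exactly one child. -/
def IsElementary (T : PreTree α V) (v : V) : Prop := ∃! w, T.arc v w

/-- `T` is an 𝒜-tree: a finite rooted tree (every node reachable from the root by a unique
directed path, which is captured by unique parents, acyclicity and reachability from a root)
with an injective partial labeling such that every leaf is labeled. -/
structure IsATree (T : PreTree α V) : Prop where
  finite_nodes : T.nodes.Finite
  arc_mem_left : ∀ {u v : V}, T.arc u v → u ∈ T.nodes
  arc_mem_right : ∀ {u v : V}, T.arc u v → v ∈ T.nodes
  parent_unique : ∀ {u v w : V}, T.arc u w → T.arc v w → u = v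
  acyclic : ∀ {u v : V}, T.arc u v → ¬ T.path v u
  rooted : T.nodes.Nonempty → ∃ r ∈ T.nodes, ∀ v ∈ T.nodes, T.path r v
  label_mem : ∀ {v : V} {a : α}, T.label v = some a → v ∈ T.nodes
  label_inj : ∀ {u v : V} {a : α}, T.label u = some a → T.label v = some a → u = v
  leaf_labeled : ∀ v ∈ T.nodes, (∀ w, ¬ T.arc v w) → ∃ a, T.label v = some a

/-- A semi-labeled tree over `𝒜` is an 𝒜-tree all of whose elementary nodes are labeled. -/
def IsSemiLabeled (T : PreTree α V) : Prop :=
  T.IsATree ∧ ∀ v ∈ T.nodes, T.IsElementary v → ∃ a, T.label v = some a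

open Classical in
/-- The restriction `T|X`: the subtree of `T` induced on the nodes whose cluster meets `X`,
keeping exactly the labels that belong to `X`. -/
noncomputable def restrict (T : PreTree α V) (X : Set α) : PreTree α V where
  nodes := {v | v ∈ T.nodes ∧ (T.cluster v ∩ X).Nonempty}
  arc u v := T.arc u v ∧ (T.cluster u ∩ X).Nonempty ∧ (T.cluster v ∩ X).Nonempty
  label v := if (∃ a ∈ X, T.label v = some a) then T.label v else none

/-- A weak topological embedding `f : S → T`: an injective map on nodes which preserves labels
and preserves and reflects directed paths. -/
def IsWTE (S : PreTree α V) (T : PreTree α W) (f : V → W) : Prop :=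
  (∀ v ∈ S.nodes, f v ∈ T.nodes) ∧
  (∀ u ∈ S.nodes, ∀ v ∈ S.nodes, f u = f v → u = v) ∧
  (∀ (v : V) (a : α), S.label v = some a → T.label (f v) = some a) ∧
  (∀ u ∈ S.nodes, ∀ v ∈ S.nodes, (S.path u v ↔ T.path (f u) (f v)))

/-- Two 𝒜-trees are ancestrally compatible when they admit weak topological embeddings into
a same 𝒜-tree. -/
def AncCompat (T₁ : PreTree α V) (T₂ : PreTree α W) : Prop :=
  ∃ (U : Type) (T : PreTree α U), T.IsATree ∧ (∃ f, IsWTE T₁ T f) ∧ (∃ g, IsWTE T₂ T g)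

/-- `m` is the most recent common ancestor of `x` and `y` in `T`. -/
def IsMRCA (T : PreTree α V) (x y m : V) : Prop :=
  T.path m x ∧ T.path m y ∧ ∀ n, T.path n x → T.path n y → T.path n m

/-- Local compatibility: condition (C1) on pairs of common labels and condition (C2)
on triples of common labels. -/
def LocallyCompatible (T₁ : PreTree α V) (T₂ : PreTree α W) : Prop :=
  (∀ (a b : α) (x₁ y₁ : V) (x₂ y₂ : W),
      T₁.label x₁ = some a → T₁.label y₁ = some b →
      T₂.label x₂ = some a → T₂.label y₂ = some b →
      (T₁.path x₁ y₁ ↔ T₂.path x₂ y₂)) ∧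
  (∀ (a b c : α) (va₁ vb₁ vc₁ m₁ m₁' : V) (va₂ vb₂ vc₂ m₂ m₂' : W),
      T₁.label va₁ = some a → T₁.label vb₁ = some b → T₁.label vc₁ = some c →
      T₂.label va₂ = some a → T₂.label vb₂ = some b → T₂.label vc₂ = some c →
      IsMRCA T₁ vb₁ vc₁ m₁ → IsMRCA T₁ va₁ vb₁ m₁' →
      IsMRCA T₂ va₂ vb₂ m₂ → IsMRCA T₂ vb₂ vc₂ m₂' →
      T₁.pathNT m₁ m₁' → ¬ T₂.pathNT m₂ m₂')

/-- `T` ancestrally displays `S`. -/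
def Displays (T : PreTree α W) (S : PreTree α V) : Prop :=
  S.labelSet ⊆ T.labelSet ∧
  (∀ (a b : α) (x y : V) (x' y' : W),
      S.label x = some a → S.label y = some b →
      T.label x' = some a → T.label y' = some b →
      (S.path x y ↔ T.path x' y')) ∧
  S.clusterRep ⊆ (T.restrict S.labelSet).clusterRep

/-- An unlabeled elementary node. -/
def ElemUnlab (T : PreTree α V) (v : V) : Prop := T.label v = none ∧ T.IsElementary v

/-- The semi-labeled tree obtained from `S` by removing its unlabeled elementary nodes and
replacing by single arcs the maximal paths all of whose intermediate nodes are unlabeled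
and elementary. -/
def contract (S : PreTree α V) : PreTree α V where
  nodes := {v | v ∈ S.nodes ∧ ¬ ElemUnlab S v}
  arc u v := (u ∈ S.nodes ∧ ¬ ElemUnlab S u) ∧ (v ∈ S.nodes ∧ ¬ ElemUnlab S v) ∧
    ∃ l : List V, List.Chain' S.arc (u :: (l ++ [v])) ∧ ∀ m ∈ l, ElemUnlab S m
  label := S.label

/-- `X` is the smallest member of the family `R` containing the label `a`. -/
def SmallestContaining (R : Set (Set α)) (a : α) (X : Set α) : Prop :=
  X ∈ R ∧ a ∈ X ∧ ∀ Y ∈ R, a ∈ Y → X ⊆ Y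

/-- `m_{ℓ,Y}`: the number of nodes of `T` whose cluster is `Y`. -/
noncomputable def mcount (T : PreTree α V) (Y : Set α) : ℕ :=
  {v | v ∈ T.nodes ∧ T.cluster v = Y}.ncard

/-- `𝒞 = 𝒞_𝒜(T₁) ∪ 𝒞_𝒜(T₂)`. -/
def joinC (T₁ : PreTree α V) (T₂ : PreTree α W) : Set (Set α) :=
  T₁.clusterRep ∪ T₂.clusterRep

/-- `n_Y = max (m_{1,Y}, m_{2,Y})`. -/
noncomputable def joinN (T₁ : PreTree α V) (T₂ : PreTree α W) (Y : Set α) : ℕ :=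
  max (mcount T₁ Y) (mcount T₂ Y)

open Classical in
/-- The join `T_{1,2}` of two 𝒜-trees with the same label set: nodes are the pairs
`w_{Y,j} = (Y, j)` with `Y ∈ 𝒞` and `1 ≤ j ≤ n_Y`, with the chain arcs `(w_{Y,j}, w_{Y,j-1})`
and the arcs `(w_{Y,1}, w_{Z,n_Z})` for `Z ⊊ Y` maximal in `𝒞`, and `w_{Y,1}` labeled `A`
exactly when `Y = (⋃ {Z ∈ 𝒞 ∣ Z ⊊ Y}) ⊔ {A}`. -/
noncomputable def join (T₁ : PreTree α V) (T₂ : PreTree α W) : PreTree α (Set α × ℕ) where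
  nodes := {p | p.1 ∈ joinC T₁ T₂ ∧ 1 ≤ p.2 ∧ p.2 ≤ joinN T₁ T₂ p.1}
  arc p q := p.1 ∈ joinC T₁ T₂ ∧ q.1 ∈ joinC T₁ T₂ ∧
    ((q.1 = p.1 ∧ p.2 = q.2 + 1 ∧ 1 ≤ q.2 ∧ p.2 ≤ joinN T₁ T₂ p.1) ∨
     (p.2 = 1 ∧ q.1 ⊂ p.1 ∧ q.2 = joinN T₁ T₂ q.1 ∧ 1 ≤ q.2 ∧
       ¬ ∃ Z ∈ joinC T₁ T₂, q.1 ⊂ Z ∧ Z ⊂ p.1))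
  label p :=
    if h : p.2 = 1 ∧ p.1 ∈ joinC T₁ T₂ ∧
        ∃ a : α, a ∉ ⋃₀ {Z ∈ joinC T₁ T₂ | Z ⊂ p.1} ∧
          p.1 = (⋃₀ {Z ∈ joinC T₁ T₂ | Z ⊂ p.1}) ∪ {a}
    then some h.2.2.choose else none

/-- The canonical map `f_ℓ : V(T_ℓ) → V(T_{1,2})`, sending the `i`-th node (from the bottom)
of the chain of nodes of `T` with cluster `Y` to `w_{Y,i}`. -/
noncomputable def joinMap (T : PreTree α V) (v : V) : Set α × ℕ :=
  (T.cluster v, {u | u ∈ T.nodes ∧ T.cluster u = T.cluster v ∧ T.pathNT v u}.ncard + 1)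

end PreTree

namespace PreTreeAux

open PreTree

variable {α V : Type}

lemma desc_mem {T : PreTree α V} (hT : T.IsATree) {v z : V}
    (h : Relation.TransGen T.arc v z) : z ∈ T.nodes := by
  induction h with
  | single h => exact hT.arc_mem_right h
  | tail _ h _ => exact hT.arc_mem_right h

lemma no_self_trans {T : PreTree α V} (hT : T.IsATree) {v : V}
    (h : Relation.TransGen T.arc v v) : False := by
  obtain ⟨c, hvc, hcv⟩ := (Relation.TransGen.head'_iff).mp h
  exact hT.acyclic hvc hcv

/-- Every node has a label in its cluster. -/
lemma exists_cluster_label {T : PreTree α V} (hT : T.IsATree) :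
    ∀ (n : ℕ) (v : V), v ∈ T.nodes →
      {z | Relation.TransGen T.arc v z}.ncard ≤ n → ∃ a, a ∈ T.cluster v := by
  intro n
  induction n with
  | zero =>
    intro v hv hn
    by_cases hl : ∀ w, ¬ T.arc v w
    · obtain ⟨a, ha⟩ := hT.leaf_labeled v hv hl
      exact ⟨a, v, Relation.ReflTransGen.refl, ha⟩
    · push_neg at hl
      obtain ⟨c, hc⟩ := hl
      exfalso
      have hfin : {z | Relation.TransGen T.arc v z}.Finite :=
        hT.finite_nodes.subset (fun z hz => desc_mem hT hz)
      have : 0 < {z | Relation.TransGen T.arc v z}.ncard :=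
        (Set.ncard_pos hfin).mpr ⟨c, Relation.TransGen.single hc⟩
      omega
  | succ n ih =>
    intro v hv hn
    by_cases hl : ∀ w, ¬ T.arc v w
    · obtain ⟨a, ha⟩ := hT.leaf_labeled v hv hl
      exact ⟨a, v, Relation.ReflTransGen.refl, ha⟩
    · push_neg at hl
      obtain ⟨c, hc⟩ := hl
      have hfinv : {z | Relation.TransGen T.arc v z}.Finite :=
        hT.finite_nodes.subset (fun z hz => desc_mem hT hz)
      have hss : {z | Relation.TransGen T.arc c z} ⊂ {z | Relation.TransGen T.arc v z} := by
        constructor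
        · intro z hz
          exact Relation.TransGen.head hc hz
        · intro hsub
          exact no_self_trans hT (hsub (Relation.TransGen.single hc))
      have hlt : {z | Relation.TransGen T.arc c z}.ncard <
          {z | Relation.TransGen T.arc v z}.ncard :=
        Set.ncard_lt_ncard hss hfinv
      obtain ⟨a, w, hcw, hwa⟩ := ih c (hT.arc_mem_right hc) (by omega)
      exact ⟨a, w, Relation.ReflTransGen.head hc hcw, hwa⟩

/-- Two ancestors of a common node are comparable. -/
lemma comp {T : PreTree α V} (hT : T.IsATree) {u v w : V}
    (hu : T.path u w) (hv : T.path v w) : T.path u v ∨ T.path v u := by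
  induction hu using Relation.ReflTransGen.head_induction_on with
  | refl => exact Or.inr hv
  | head hac _ ih =>
    rcases ih with h | h
    · exact Or.inl (Relation.ReflTransGen.head hac h)
    · rcases h.cases_tail with heq | ⟨p, hvp, hpc⟩
      · subst heq
        exact Or.inl (Relation.ReflTransGen.single hac)
      · obtain rfl := hT.parent_unique hpc hac
        exact Or.inr hvp

/-- A path gives a chain list. -/
lemma path_list {T : PreTree α V} {u v : V} (h : T.path u v) :
    ∃ l : List V, List.Chain' T.arc l ∧ l.head? = some u ∧ l.getLast? = some v ∧
      (∀ m ∈ l, T.path u m ∧ T.path m v) ∧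
      (∀ m ∈ l.dropLast, ∃ c, T.arc m c ∧ T.path c v) := by
  induction h using Relation.ReflTransGen.head_induction_on with
  | refl =>
    refine ⟨[v], List.IsChain.singleton v, by simp, by simp, ?_, by simp⟩
    intro m hm
    simp only [List.mem_singleton] at hm
    subst hm
    exact ⟨Relation.ReflTransGen.refl, Relation.ReflTransGen.refl⟩
  | @head a c hac hcv ih =>
    obtain ⟨l, hch, hh, hlast, hmem, hdl⟩ := ih
    obtain ⟨t, rfl⟩ : ∃ t, l = c :: t := by
      cases l with
      | nil => simp at hh
      | cons x t => simp at hh; exact ⟨t, by rw [hh]⟩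
    refine ⟨a :: c :: t, ?_, by simp, by simp_all, ?_, ?_⟩
    · exact List.IsChain.cons_cons hac hch
    · intro m hm
      rcases List.mem_cons.mp hm with rfl | hm
      · exact ⟨Relation.ReflTransGen.refl, Relation.ReflTransGen.head hac hcv⟩
      · obtain ⟨h1, h2⟩ := hmem m hm
        exact ⟨Relation.ReflTransGen.head hac h1, h2⟩
    · intro m hm
      rw [List.dropLast_cons₂] at hm
      rcases List.mem_cons.mp hm with rfl | hm
      · exact ⟨c, hac, hcv⟩
      · exact hdl m hm

/-- Main lemma: directional version. -/
lemma main_dir {T : PreTree α V} (hT : T.IsATree) {u v : V} (hu : u ∈ T.nodes)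
    (hcl : T.cluster u = T.cluster v) (hp : T.path u v) :
    ∃ l : List V, List.Chain' T.arc l ∧ l.head? = some u ∧ l.getLast? = some v ∧
      ∀ m ∈ l.dropLast, T.label m = none ∧ T.IsElementary m := by
  obtain ⟨l, hch, hh, hlast, hmem, hdl⟩ := path_list hp
  refine ⟨l, hch, hh, hlast, ?_⟩
  intro m hm
  have hml : m ∈ l := List.dropLast_subset l hm
  obtain ⟨hum, hmv⟩ := hmem m hml
  obtain ⟨c, hmc, hcv⟩ := hdl m hm
  have hmne : ¬ T.path c m := fun hcm => hT.acyclic hmc hcm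
  constructor
  · by_contra hlab
    obtain ⟨a, ha⟩ := Option.ne_none_iff_exists'.mp hlab
    have hacl : a ∈ T.cluster v := hcl ▸ ⟨m, hum, ha⟩
    obtain ⟨w, hvw, hwa⟩ := hacl
    obtain rfl := hT.label_inj hwa ha
    exact hmne (hcv.trans hvw)
  · refine ⟨c, hmc, ?_⟩
    intro c' hmc'
    by_contra hne
    have hc'mem : c' ∈ T.nodes := hT.arc_mem_right hmc'
    obtain ⟨a, w', hcw', hw'a⟩ := exists_cluster_label hT _ c' hc'mem le_rfl
    have hacl : a ∈ T.cluster v :=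
      hcl ▸ ⟨w', hum.trans (Relation.ReflTransGen.head hmc' hcw'), hw'a⟩
    obtain ⟨w'', hvw'', hw''a⟩ := hacl
    obtain rfl := hT.label_inj hw''a hw'a
    have hcw : T.path c w'' := hcv.trans hvw''
    rcases comp hT hcw hcw' with hcc | hcc
    · rcases hcc.cases_tail with heq | ⟨p, hcp, hpc'⟩
      · exact hne heq
      · obtain rfl := hT.parent_unique hpc' hmc'
        exact hT.acyclic hmc hcp
    · rcases hcc.cases_tail with heq | ⟨p, hcp, hpc⟩
      · exact hne heq.symm
      · obtain rfl := hT.parent_unique hpc hmc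
        exact hT.acyclic hmc' hcp

end PreTreeAux

/-- If two different nodes of an 𝒜-tree have the same cluster, then there is a
directed path from one to the other whose origin and intermediate nodes are all unlabeled
and elementary. -/
theorem stmt2 {α V : Type} (T : PreTree α V) (hT : T.IsATree)
    (x y : V) (hx : x ∈ T.nodes) (hy : y ∈ T.nodes) (hxy : x ≠ y)
    (h : T.cluster x = T.cluster y) :
    ∃ (u v : V) (l : List V),
      ((u = x ∧ v = y) ∨ (u = y ∧ v = x)) ∧
      List.Chain' T.arc l ∧ l.head? = some u ∧ l.getLast? = some v ∧
      ∀ m ∈ l.dropLast, T.label m = none ∧ T.IsElementary m := by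
  obtain ⟨a, w, hxw, hwa⟩ := PreTreeAux.exists_cluster_label hT _ x hx le_rfl
  have hacl : a ∈ T.cluster y := h ▸ ⟨w, hxw, hwa⟩
  obtain ⟨w', hyw', hw'a⟩ := hacl
  obtain rfl := hT.label_inj hw'a hwa
  rcases PreTreeAux.comp hT hxw hyw' with hp | hp
  · obtain ⟨l, h1, h2, h3, h4⟩ := PreTreeAux.main_dir hT hx h hp
    exact ⟨x, y, l, Or.inl ⟨rfl, rfl⟩, h1, h2, h3, h4⟩
  · obtain ⟨l, h1, h2, h3, h4⟩ := PreTreeAux.main_dir hT hy h.symm hp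
    exact ⟨y, x, l, Or.inr ⟨rfl, rfl⟩, h1, h2, h3, h4⟩
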